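/- For every $r \ge 2$ and every $n \ge 2$ there exists an $n$-balanced $r$-partite $r$-graph $H$ such that every legal $(r-1)$-tuple has degree at least $n/2 - 1$ in $H$, but $H$ has no perfect matching. -/

import Mathlib

/-- The degree of the legal `(r-1)`-tuple obtained by restricting the full tuple `f`
to the sides other than side `j`: the number of edges agreeing with `f` outside side `j`. -/
def degAvoiding {r n : ℕ} (E : Finset (Fin r → Fin n)) (j : Fin r)
    (f : Fin r → Fin n) : ℕ :=
  (E.filter (fun e => ∀ i, i ≠ j → e i = f i)).card

/-- A perfect matching of an `r`-partite `r`-graph whose sides are `r` copies of `Fin n`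
(side `i` consisting of the values of the `i`-th coordinate) with edge set `E`:
a subset of `E` such that every vertex of every side lies in exactly one of its edges
(this forces the edges to be pairwise disjoint and to cover all vertices). -/
def IsPerfectMatchingFin {r n : ℕ} (E M : Finset (Fin r → Fin n)) : Prop :=
  M ⊆ E ∧ ∀ (i : Fin r) (v : Fin n), ∃! e, e ∈ M ∧ e i = v

namespace Stmt6Aux

/-- The shift constant. -/
def bconst (r n : ℕ) : ZMod 2 := 1 + (r : ZMod 2) * ∑ v : Fin n, ((v : ℕ) : ZMod 2)

/-- Weight of vertex `v` on side `i`. -/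
def g (r n : ℕ) (i : Fin r) (v : Fin n) : ZMod 2 :=
  ((v : ℕ) : ZMod 2) + (if (i : ℕ) = 0 ∧ (v : ℕ) = 0 then bconst r n else 0)

/-- Fiber of side `i` over weight `t`. -/
def fib (r n : ℕ) (i : Fin r) (t : ZMod 2) : Finset (Fin n) :=
  Finset.univ.filter (fun v => g r n i v = t)

lemma fib_compl (r n : ℕ) (i : Fin r) (t : ZMod 2) :
    (fib r n i t).card + (fib r n i (t + 1)).card = n := by
  have key : ∀ x t : ZMod 2, (¬ x = t) ↔ x = t + 1 := by decide
  have h := Finset.card_filter_add_card_filter_not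
    (s := (Finset.univ : Finset (Fin n))) (p := fun v => g r n i v = t)
  rw [Finset.card_univ, Fintype.card_fin] at h
  have hcongr : (Finset.univ.filter fun v : Fin n => ¬ g r n i v = t) = fib r n i (t + 1) := by
    ext v
    simp only [fib, Finset.mem_filter, Finset.mem_univ, true_and, key]
  rw [hcongr] at h
  simpa [fib] using h

lemma fib_succ_le (r n : ℕ) (hn : 2 ≤ n) (i : Fin r) (t : ZMod 2) :
    (fib r n i (t + 1)).card ≤ (fib r n i t).card + 2 := by
  classical
  set s := (fib r n i (t + 1)).filter (fun v : Fin n => (v : ℕ) ≠ 0 ∧ (v : ℕ) + 1 ≠ n) with hs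
  -- the exceptional elements
  have hsplit := Finset.card_filter_add_card_filter_not
    (s := fib r n i (t + 1)) (p := fun v : Fin n => (v : ℕ) ≠ 0 ∧ (v : ℕ) + 1 ≠ n)
  rw [← hs] at hsplit
  have hexc : ((fib r n i (t + 1)).filter
      (fun v : Fin n => ¬ ((v : ℕ) ≠ 0 ∧ (v : ℕ) + 1 ≠ n))).card ≤ 2 := by
    have hsub : (fib r n i (t + 1)).filter
        (fun v : Fin n => ¬ ((v : ℕ) ≠ 0 ∧ (v : ℕ) + 1 ≠ n)) ⊆
        {⟨0, by omega⟩, ⟨n - 1, by omega⟩} := by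
      intro v hv
      rw [Finset.mem_filter] at hv
      rcases hv with ⟨-, hv⟩
      push_neg at hv
      rw [Finset.mem_insert, Finset.mem_singleton]
      by_cases h0 : (v : ℕ) = 0
      · left; exact Fin.ext h0
      · right
        apply Fin.ext
        show (v : ℕ) = n - 1
        have := hv h0
        have := v.isLt
        omega
    calc _ ≤ ({⟨0, by omega⟩, ⟨n - 1, by omega⟩} : Finset (Fin n)).card :=
          Finset.card_le_card hsub
      _ ≤ 2 := by
          apply le_trans (Finset.card_insert_le _ _)
          simp
  have hmain : s.card ≤ (fib r n i t).card := by
    apply Finset.card_le_card_of_injOn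
      (fun v : Fin n => if h : (v : ℕ) + 1 < n then (⟨(v : ℕ) + 1, h⟩ : Fin n) else v)
    · intro v hv
      rw [hs, Finset.mem_coe, Finset.mem_filter] at hv
      rcases hv with ⟨hv1, hv0, hvn⟩
      have hvl : (v : ℕ) + 1 < n := by have := v.isLt; omega
      simp only [Finset.mem_coe]; rw [dif_pos hvl]
      rw [fib, Finset.mem_filter] at hv1 ⊢
      refine ⟨Finset.mem_univ _, ?_⟩
      have hgv : g r n i v = ((v : ℕ) : ZMod 2) := by
        rw [g, if_neg (by tauto), add_zero]
      have : (((v : ℕ) : ZMod 2)) = t + 1 := by rw [← hgv]; exact hv1.2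
      have h2 : g r n i (⟨(v : ℕ) + 1, hvl⟩ : Fin n) = ((v : ℕ) : ZMod 2) + 1 := by
        rw [g, if_neg (by simp), add_zero]
        push_cast
        ring
      rw [h2, this]
      have : ∀ t : ZMod 2, t + 1 + 1 = t := by decide
      exact this t
    · intro v1 hv1 v2 hv2 heq
      simp only [hs, Finset.mem_coe, Finset.mem_filter] at hv1 hv2
      have h1 : (v1 : ℕ) + 1 < n := by have := v1.isLt; have := hv1.2.2; omega
      have h2 : (v2 : ℕ) + 1 < n := by have := v2.isLt; have := hv2.2.2; omega
      simp only at heq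
      rw [dif_pos h1, dif_pos h2] at heq
      have : (v1 : ℕ) + 1 = (v2 : ℕ) + 1 := congrArg Fin.val heq
      exact Fin.ext (by omega)
  omega

lemma fib_card (r n : ℕ) (hn : 2 ≤ n) (i : Fin r) (t : ZMod 2) :
    n ≤ 2 * (fib r n i t).card + 2 := by
  have h1 := fib_compl r n i t
  have h2 := fib_succ_le r n hn i t
  omega

/-- The edge set. -/
def Edges (r n : ℕ) : Finset (Fin r → Fin n) :=
  Finset.univ.filter (fun e => ∑ i, g r n i (e i) = 0)

lemma deg_eq (r n : ℕ) (j : Fin r) (f : Fin r → Fin n) :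
    degAvoiding (Edges r n) j f
      = (fib r n j (- ∑ i ∈ Finset.univ.erase j, g r n i (f i))).card := by
  classical
  set t : ZMod 2 := - ∑ i ∈ Finset.univ.erase j, g r n i (f i) with ht
  rw [degAvoiding]
  apply Finset.card_bij (fun e _ => e j)
  · intro e he
    rw [Finset.mem_filter] at he
    rcases he with ⟨heE, hef⟩
    rw [Edges, Finset.mem_filter] at heE
    have hsum := heE.2
    rw [← Finset.add_sum_erase _ _ (Finset.mem_univ j)] at hsum
    have : ∑ i ∈ Finset.univ.erase j, g r n i (e i)
        = ∑ i ∈ Finset.univ.erase j, g r n i (f i) := by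
      apply Finset.sum_congr rfl
      intro i hi
      rw [hef i (Finset.ne_of_mem_erase hi)]
    rw [this] at hsum
    rw [fib, Finset.mem_filter]
    exact ⟨Finset.mem_univ _, by rw [ht]; linear_combination hsum⟩
  · intro e1 he1 e2 he2 heq
    rw [Finset.mem_filter] at he1 he2
    funext i
    by_cases hij : i = j
    · rw [hij]; exact heq
    · rw [he1.2 i hij, he2.2 i hij]
  · intro v hv
    rw [fib, Finset.mem_filter] at hv
    refine ⟨Function.update f j v, ?_, Function.update_self j v f⟩
    rw [Finset.mem_filter]
    constructor
    · rw [Edges, Finset.mem_filter]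
      refine ⟨Finset.mem_univ _, ?_⟩
      rw [← Finset.add_sum_erase _ _ (Finset.mem_univ j)]
      have hrest : ∑ i ∈ Finset.univ.erase j, g r n i (Function.update f j v i)
          = ∑ i ∈ Finset.univ.erase j, g r n i (f i) := by
        apply Finset.sum_congr rfl
        intro i hi
        rw [Function.update_of_ne (Finset.ne_of_mem_erase hi)]
      rw [hrest, Function.update_self, hv.2, ht]
      ring
    · intro i hij
      exact Function.update_of_ne hij _ _

lemma no_pm (r n : ℕ) (hr : 2 ≤ r) (hn : 2 ≤ n) :
    ¬ ∃ M : Finset (Fin r → Fin n), IsPerfectMatchingFin (Edges r n) M := by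
  rintro ⟨M, hsub, huniq⟩
  -- coordinate maps are bijections
  have hsum_i : ∀ i : Fin r, ∑ e ∈ M, g r n i (e i) = ∑ v : Fin n, g r n i v := by
    intro i
    apply Finset.sum_bij (fun e _ => e i)
    · intro e _; exact Finset.mem_univ _
    · intro e1 he1 e2 he2 heq
      exact (huniq i (e2 i)).unique ⟨he1, heq⟩ ⟨he2, rfl⟩
    · intro v _
      obtain ⟨e, ⟨heM, hev⟩, -⟩ := huniq i v
      exact ⟨e, heM, hev⟩
    · intro e _; rfl
  have h0 : ∑ e ∈ M, ∑ i, g r n i (e i) = 0 := by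
    apply Finset.sum_eq_zero
    intro e he
    have := hsub he
    rw [Edges, Finset.mem_filter] at this
    exact this.2
  rw [Finset.sum_comm] at h0
  have h0' : ∑ i : Fin r, ∑ v : Fin n, g r n i v = 0 := by
    rw [← h0]
    exact Finset.sum_congr rfl (fun i _ => (hsum_i i).symm)
  -- compute the total sum
  set S : ZMod 2 := ∑ v : Fin n, ((v : ℕ) : ZMod 2) with hS
  have hside : ∀ i : Fin r, ∑ v : Fin n, g r n i v
      = S + (if (i : ℕ) = 0 then bconst r n else 0) := by
    intro i
    have hg : ∑ v : Fin n, g r n i v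
        = ∑ v : Fin n, (((v : ℕ) : ZMod 2)
            + if (i : ℕ) = 0 ∧ (v : ℕ) = 0 then bconst r n else 0) := rfl
    rw [hg, Finset.sum_add_distrib, hS]
    congr 1
    by_cases hi : (i : ℕ) = 0
    · rw [if_pos hi]
      rw [Finset.sum_eq_single_of_mem (⟨0, by omega⟩ : Fin n) (Finset.mem_univ _)]
      · rw [if_pos ⟨hi, rfl⟩]
      · intro v _ hv
        rw [if_neg]
        rintro ⟨-, hv0⟩
        exact hv (Fin.ext hv0)
    · rw [if_neg hi]
      apply Finset.sum_eq_zero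
      intro v _
      rw [if_neg (by tauto)]
  have htot : ∑ i : Fin r, ∑ v : Fin n, g r n i v = r • S + bconst r n := by
    rw [Finset.sum_congr rfl (fun i _ => hside i), Finset.sum_add_distrib,
      Finset.sum_const, Finset.card_univ, Fintype.card_fin]
    congr 1
    rw [Finset.sum_eq_single_of_mem (⟨0, by omega⟩ : Fin r) (Finset.mem_univ _)]
    · rw [if_pos rfl]
    · intro i _ hi
      rw [if_neg]
      intro h
      exact hi (Fin.ext h)
  rw [htot, bconst, ← hS, nsmul_eq_mul] at h0'
  have hone : (1 : ZMod 2) = 0 := by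
    have hx : ∀ a : ZMod 2, a + (1 + a) = 1 := by decide
    rw [← hx ((r : ZMod 2) * S)]
    exact h0'
  exact absurd hone (by decide)

end Stmt6Aux

theorem stmt_6 (r n : ℕ) (hr : 2 ≤ r) (hn : 2 ≤ n) :
    ∃ E : Finset (Fin r → Fin n),
      (∀ (j : Fin r) (f : Fin r → Fin n),
        (n : ℝ) / 2 - 1 ≤ (degAvoiding E j f : ℝ)) ∧
      ¬ ∃ M : Finset (Fin r → Fin n), IsPerfectMatchingFin E M := by
  refine ⟨Stmt6Aux.Edges r n, ?_, Stmt6Aux.no_pm r n hr hn⟩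
  intro j f
  rw [Stmt6Aux.deg_eq]
  have h := Stmt6Aux.fib_card r n hn j (- ∑ i ∈ Finset.univ.erase j, Stmt6Aux.g r n i (f i))
  have h' : (n : ℝ) ≤ 2 * ((Stmt6Aux.fib r n j
      (- ∑ i ∈ Finset.univ.erase j, Stmt6Aux.g r n i (f i))).card : ℝ) + 2 := by
    exact_mod_cast h
  linarith
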